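/- Let (A,B,C) be a bipartite LR triple on V of diameter d = 2, with tridiagonal space 𝒳 and J as defined. Then 𝒳 has dimension 6; moreover J, AJ, BJ form a basis of the vector space 𝒳J = {XJ : X ∈ 𝒳}, and I−J, A(I−J), B(I−J) form a basis of the vector space 𝒳(I−J) = {X(I−J) : X ∈ 𝒳}. -/

import Mathlib

/-- A decomposition of `V` of diameter `d`: a sequence of one-dimensional subspaces
`sub 0, …, sub d` whose (direct) sum is `V`; by convention `sub i = ⊥` for `i > d`
(encoding `V_{-1} = 0` and `V_{d+1} = 0`). -/
structure LRDecomp (F : Type*) [Field F] (V : Type*) [AddCommGroup V] [Module F V]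
    (d : ℕ) where
  sub : ℕ → Submodule F V
  finrank_eq_one : ∀ i ≤ d, Module.finrank F (sub i) = 1
  eq_bot_of_gt : ∀ i, d < i → sub i = ⊥
  isInternal : DirectSum.IsInternal fun i : Fin (d + 1) => sub i.val

variable {F : Type*} [Field F] {V : Type*} [AddCommGroup V] [Module F V]

/-- `A` lowers the decomposition: `A V_i = V_{i-1}` for `0 ≤ i ≤ d` (with `V_{-1} = 0`). -/
def Lowers {d : ℕ} (A : Module.End F V) (D : LRDecomp F V d) : Prop :=
  Submodule.map A (D.sub 0) = ⊥ ∧ ∀ i < d, Submodule.map A (D.sub (i + 1)) = D.sub i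

/-- `B` raises the decomposition: `B V_i = V_{i+1}` for `0 ≤ i ≤ d` (with `V_{d+1} = 0`). -/
def Raises {d : ℕ} (B : Module.End F V) (D : LRDecomp F V d) : Prop :=
  ∀ i ≤ d, Submodule.map B (D.sub i) = D.sub (i + 1)

/-- `D` is the (A,B)-decomposition: it is lowered by `A` and raised by `B`. -/
def IsLRPairWith {d : ℕ} (A B : Module.End F V) (D : LRDecomp F V d) : Prop :=
  Lowers A D ∧ Raises B D

/-- `(A,B,C)` is an LR triple of diameter `d`. -/
def IsLRTriple (d : ℕ) (A B C : Module.End F V) : Prop :=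
  (∃ D : LRDecomp F V d, IsLRPairWith A B D) ∧
  (∃ D : LRDecomp F V d, IsLRPairWith B C D) ∧
  (∃ D : LRDecomp F V d, IsLRPairWith C A D)

/-- `X` is tridiagonal with respect to the decomposition `D`:
`X V_i ⊆ V_{i-1} + V_i + V_{i+1}` (note `V_{0-1} ⊔ V_0 = V_0` makes `ℕ`-subtraction correct). -/
def IsTridiagonal {d : ℕ} (X : Module.End F V) (D : LRDecomp F V d) : Prop :=
  ∀ i, ∀ v ∈ D.sub i, X v ∈ D.sub (i - 1) ⊔ D.sub i ⊔ D.sub (i + 1)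

/-- The tridiagonal space of the LR triple with decompositions `D₁, D₂, D₃`. -/
def tridiagSpace {d : ℕ} (D₁ D₂ D₃ : LRDecomp F V d) : Submodule F (Module.End F V) where
  carrier := {X | IsTridiagonal X D₁ ∧ IsTridiagonal X D₂ ∧ IsTridiagonal X D₃}
  add_mem' := by
    rintro X Y ⟨hX1, hX2, hX3⟩ ⟨hY1, hY2, hY3⟩
    exact ⟨fun i v hv => by simpa using add_mem (hX1 i v hv) (hY1 i v hv),
           fun i v hv => by simpa using add_mem (hX2 i v hv) (hY2 i v hv),
           fun i v hv => by simpa using add_mem (hX3 i v hv) (hY3 i v hv)⟩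
  zero_mem' :=
    ⟨fun i v _ => by simp,
     fun i v _ => by simp,
     fun i v _ => by simp⟩
  smul_mem' := by
    rintro c X ⟨hX1, hX2, hX3⟩
    exact ⟨fun i v hv => by simpa using Submodule.smul_mem _ c (hX1 i v hv),
           fun i v hv => by simpa using Submodule.smul_mem _ c (hX2 i v hv),
           fun i v hv => by simpa using Submodule.smul_mem _ c (hX3 i v hv)⟩

/-- `E` is the idempotent sequence of the decomposition `D`: each `E i` acts as the
identity on `sub i` and as zero on `sub j` for `j ≠ i`. -/
def IsIdemSeq {d : ℕ} (D : LRDecomp F V d) (E : ℕ → Module.End F V) : Prop :=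
  ∀ i, (∀ v ∈ D.sub i, E i v = v) ∧ ∀ j, j ≠ i → ∀ v ∈ D.sub j, E i v = 0

/-- Bipartite: all trace data `a_i = tr(C E_i)`, `a'_i = tr(A E'_i)`, `a''_i = tr(B E''_i)`
vanish, where `E, E', E''` are the idempotent data of the triple `(A,B,C)`. -/
def IsBipartite (d : ℕ) (A B C : Module.End F V)
    (E E' E'' : ℕ → Module.End F V) : Prop :=
  ∀ i ≤ d, LinearMap.trace F V (C * E i) = 0 ∧
    LinearMap.trace F V (A * E' i) = 0 ∧ LinearMap.trace F V (B * E'' i) = 0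

/-- An LR pair `(A,B)` has `q`-Weyl type. -/
def IsQWeylPair (q : F) (A B : Module.End F V) : Prop :=
  q ≠ 0 ∧ q ^ 2 ≠ 1 ∧ q • (A * B) - q⁻¹ • (B * A) = (q - q⁻¹) • (1 : Module.End F V)

/-- An LR triple `(A,B,C)` has `q`-Weyl type. -/
def IsQWeylTriple (q : F) (A B C : Module.End F V) : Prop :=
  IsQWeylPair q A B ∧ IsQWeylPair q B C ∧ IsQWeylPair q C A

/-- `v` is an `(A,B)`-basis, relative to the `(A,B)`-decomposition `D`:
`v i ∈ sub i` is nonzero and `A v_i = v_{i-1}`. -/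
def IsLRBasisFor {d : ℕ} (A : Module.End F V) (D : LRDecomp F V d) (v : ℕ → V) : Prop :=
  (∀ i ≤ d, v i ∈ D.sub i ∧ v i ≠ 0) ∧ ∀ i, 1 ≤ i → i ≤ d → A (v i) = v (i - 1)

/-- `v` is a `(B,A)`-style basis relative to the `(A,B)`-decomposition `D` of the
reversed pair: `v i ∈ sub (d-i)` is nonzero and the lowering map sends `v i ↦ v (i-1)`.
(Used for `(C,B)`-bases relative to the `(B,C)`-decomposition, etc.) -/
def IsLRBasisRev {d : ℕ} (A : Module.End F V) (D : LRDecomp F V d) (v : ℕ → V) : Prop :=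
  (∀ i ≤ d, v i ∈ D.sub (d - i) ∧ v i ≠ 0) ∧ ∀ i, 1 ≤ i → i ≤ d → A (v i) = v (i - 1)

/-- The transition matrix from the basis `u` to the basis `w` is upper triangular
Toeplitz with parameters `α`: `w j = ∑_{i ≤ j} α_{j-i} u_i`. -/
def IsToeplitzTransition (d : ℕ) (u w : ℕ → V) (α : ℕ → F) : Prop :=
  ∀ j ≤ d, w j = ∑ i ∈ Finset.range (j + 1), α (j - i) • u i

/-- `φ` is the parameter sequence of the LR pair `(A,B)` with `(A,B)`-decomposition `D`:
`BA` acts on `V_i` as `φ i` for `1 ≤ i ≤ d`, with conventions `φ 0 = 0 = φ (d+1)`. -/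
def IsParamSeq {d : ℕ} (A B : Module.End F V) (D : LRDecomp F V d) (φ : ℕ → F) : Prop :=
  φ 0 = 0 ∧ φ (d + 1) = 0 ∧ ∀ i, 1 ≤ i → i ≤ d → ∀ v ∈ D.sub i, B (A v) = φ i • v



open Submodule in
set_option maxHeartbeats 2000000 in
lemma key {F : Type*} [Field F] {V : Type*} [AddCommGroup V] [Module F V]
    [FiniteDimensional F V] (hdim : Module.finrank F V = 3)
    (A B : Module.End F V) (DAB DBC DCA : LRDecomp F V 2)
    (e : Module.Basis (Fin 3) F V) (b c p u : F) (hb : b ≠ 0) (hc : c ≠ 0) (hp : p ≠ 0) (hu : u ≠ 0)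
    (hA0 : A (e 0) = 0) (hA1 : A (e 1) = e 0) (hA2 : A (e 2) = e 1)
    (hB0 : B (e 0) = b • e 1) (hB1 : B (e 1) = c • e 2) (hB2 : B (e 2) = 0)
    (s0 : DAB.sub 0 = span F {e 0}) (s1 : DAB.sub 1 = span F {e 1})
    (s2 : DAB.sub 2 = span F {e 2})
    (t0 : DBC.sub 0 = span F {e 2}) (t1 : DBC.sub 1 = span F {e 1})
    (t2 : DBC.sub 2 = span F {p • e 0 + u • e 2})
    (r0 : DCA.sub 0 = span F {p • e 0 + u • e 2}) (r1 : DCA.sub 1 = span F {e 1})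
    (r2 : DCA.sub 2 = span F {e 0})
    (J : Module.End F V) (hJ0 : J (e 0) = e 0) (hJ1 : J (e 1) = 0) (hJ2 : J (e 2) = e 2) :
    Module.finrank F (tridiagSpace DAB DBC DCA) = 6 ∧
    LinearIndependent F ![J, A * J, B * J] ∧
    Submodule.span F ({J, A * J, B * J} : Set (Module.End F V)) =
      Submodule.map (LinearMap.mulRight F J) (tridiagSpace DAB DBC DCA) ∧
    LinearIndependent F ![1 - J, A * (1 - J), B * (1 - J)] ∧
    Submodule.span F ({1 - J, A * (1 - J), B * (1 - J)} : Set (Module.End F V)) =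
      Submodule.map (LinearMap.mulRight F (1 - J)) (tridiagSpace DAB DBC DCA) := by
  have hco : ∀ w : V, w = e.repr w 0 • e 0 + e.repr w 1 • e 1 + e.repr w 2 • e 2 := by
    intro w
    have h := e.sum_repr w
    rw [Fin.sum_univ_three] at h
    exact h.symm
  have hz : ∀ α β γ : F, α • e 0 + β • e 1 + γ • e 2 = 0 → α = 0 ∧ β = 0 ∧ γ = 0 := by
    intro α β γ h
    refine ⟨?_, ?_, ?_⟩
    · have := congrArg (fun w => (e.repr w) 0) h
      simpa [Finsupp.single_apply] using this
    · have := congrArg (fun w => (e.repr w) 1) h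
      simpa [Finsupp.single_apply] using this
    · have := congrArg (fun w => (e.repr w) 2) h
      simpa [Finsupp.single_apply] using this
  have bot3AB : DAB.sub 3 = ⊥ := DAB.eq_bot_of_gt 3 (by omega)
  have bot3BC : DBC.sub 3 = ⊥ := DBC.eq_bot_of_gt 3 (by omega)
  have bot3CA : DCA.sub 3 = ⊥ := DCA.eq_bot_of_gt 3 (by omega)
  have hmem2 : ∀ (a1 a2 z : V) (α β : F), z = α • a1 + β • a2 →
      z ∈ span F {a1} ⊔ span F {a2} := by
    rintro a1 a2 z α β rfl
    exact add_mem (mem_sup_left (smul_mem _ _ (mem_span_singleton_self _)))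
      (mem_sup_right (smul_mem _ _ (mem_span_singleton_self _)))
  have hmem3 : ∀ (a1 a2 a3 z : V) (α β γ : F), z = α • a1 + β • a2 + γ • a3 →
      z ∈ (span F {a1} ⊔ span F {a2}) ⊔ span F {a3} := by
    rintro a1 a2 a3 z α β γ rfl
    exact add_mem (mem_sup_left (hmem2 _ _ _ _ _ rfl))
      (mem_sup_right (smul_mem _ _ (mem_span_singleton_self _)))
  -- characterization of the tridiagonal space
  have hXchar : ∀ X : Module.End F V, X ∈ tridiagSpace DAB DBC DCA ↔
      (e.repr (X (e 0)) 2 = 0 ∧ e.repr (X (e 2)) 0 = 0 ∧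
        e.repr (X (e 0)) 0 = e.repr (X (e 2)) 2) := by
    intro X
    constructor
    · rintro ⟨h1, _h2, h3⟩
      have m0 := h1 0 (e 0) (by rw [s0]; exact mem_span_singleton_self _)
      rw [show (0:ℕ) - 1 = 0 from rfl, s0, s1, sup_idem] at m0
      rw [← Submodule.span_union, Set.singleton_union] at m0
      obtain ⟨a1, b1, hab1⟩ := mem_span_pair.mp m0
      have e20 : e.repr (X (e 0)) 2 = 0 := by
        rw [← hab1]; simp [Finsupp.single_apply]
      have m2 := h1 2 (e 2) (by rw [s2]; exact mem_span_singleton_self _)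
      rw [show (2:ℕ) - 1 = 1 from rfl, show (2:ℕ) + 1 = 3 from rfl, s1, s2, bot3AB,
        sup_bot_eq, ← Submodule.span_union, Set.singleton_union] at m2
      obtain ⟨a2, b2, hab2⟩ := mem_span_pair.mp m2
      have e02 : e.repr (X (e 2)) 0 = 0 := by
        rw [← hab2]; simp [Finsupp.single_apply]
      refine ⟨e20, e02, ?_⟩
      have m3 := h3 0 (p • e 0 + u • e 2) (by rw [r0]; exact mem_span_singleton_self _)
      rw [show (0:ℕ) - 1 = 0 from rfl, r0, r1, sup_idem,
        ← Submodule.span_union, Set.singleton_union] at m3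
      obtain ⟨β, α, hw⟩ := mem_span_pair.mp m3
      have hXw : X (p • e 0 + u • e 2) = p • X (e 0) + u • X (e 2) := by
        rw [map_add, map_smul, map_smul]
      rw [hXw] at hw
      have c0 := congrArg (fun w => (e.repr w) 0) hw
      have c2 := congrArg (fun w => (e.repr w) 2) hw
      simp [Finsupp.single_apply, e02, e20] at c0 c2
      have hβ0 : β = e.repr (X (e 0)) 0 :=
        mul_left_cancel₀ hp (by linear_combination c0)
      have hβ2 : β = e.repr (X (e 2)) 2 :=
        mul_left_cancel₀ hu (by linear_combination c2)
      rw [← hβ0, ← hβ2]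
    · rintro ⟨h20, h02, h0022⟩
      obtain ⟨x00, hx00⟩ : ∃ x, e.repr (X (e 0)) 0 = x := ⟨_, rfl⟩
      obtain ⟨x10, hx10⟩ : ∃ x, e.repr (X (e 0)) 1 = x := ⟨_, rfl⟩
      obtain ⟨x01, hx01⟩ : ∃ x, e.repr (X (e 1)) 0 = x := ⟨_, rfl⟩
      obtain ⟨x11, hx11⟩ : ∃ x, e.repr (X (e 1)) 1 = x := ⟨_, rfl⟩
      obtain ⟨x21, hx21⟩ : ∃ x, e.repr (X (e 1)) 2 = x := ⟨_, rfl⟩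
      obtain ⟨x12, hx12⟩ : ∃ x, e.repr (X (e 2)) 1 = x := ⟨_, rfl⟩
      have hXe0 : X (e 0) = x00 • e 0 + x10 • e 1 := by
        have h := hco (X (e 0)); rwa [h20, zero_smul, add_zero, hx00, hx10] at h
      have hXe2 : X (e 2) = x12 • e 1 + x00 • e 2 := by
        have h := hco (X (e 2)); rwa [h02, zero_smul, zero_add, ← h0022, hx12, hx00] at h
      have hXe1 : X (e 1) = x01 • e 0 + x11 • e 1 + x21 • e 2 := by
        have h := hco (X (e 1)); rwa [hx01, hx11, hx21] at h
      have hXw : X (p • e 0 + u • e 2) = p • X (e 0) + u • X (e 2) := by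
        rw [map_add, map_smul, map_smul]
      refine ⟨?_, ?_, ?_⟩
      · -- DAB
        intro i v hv
        rcases i with _ | _ | _ | n
        · rw [s0] at hv
          obtain ⟨k, rfl⟩ := mem_span_singleton.mp hv
          show X (k • e 0) ∈ (DAB.sub 0 ⊔ DAB.sub 0) ⊔ DAB.sub 1
          rw [s0, s1]
          refine hmem3 _ _ _ _ (k * x00) 0 (k * x10) ?_
          rw [map_smul, hXe0]; module
        · rw [s1] at hv
          obtain ⟨k, rfl⟩ := mem_span_singleton.mp hv
          show X (k • e 1) ∈ (DAB.sub 0 ⊔ DAB.sub 1) ⊔ DAB.sub 2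
          rw [s0, s1, s2]
          refine hmem3 _ _ _ _ (k * x01) (k * x11)
            (k * x21) ?_
          rw [map_smul, hXe1]; module
        · rw [s2] at hv
          obtain ⟨k, rfl⟩ := mem_span_singleton.mp hv
          show X (k • e 2) ∈ (DAB.sub 1 ⊔ DAB.sub 2) ⊔ DAB.sub 3
          rw [s1, s2, bot3AB, sup_bot_eq]
          refine hmem2 _ _ _ (k * x12) (k * x00) ?_
          rw [map_smul, hXe2]; module
        · rw [DAB.eq_bot_of_gt (n+3) (by omega), mem_bot] at hv
          subst hv
          simp only [map_zero]
          exact zero_mem _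
      · -- DBC
        intro i v hv
        rcases i with _ | _ | _ | n
        · rw [t0] at hv
          obtain ⟨k, rfl⟩ := mem_span_singleton.mp hv
          show X (k • e 2) ∈ (DBC.sub 0 ⊔ DBC.sub 0) ⊔ DBC.sub 1
          rw [t0, t1]
          refine hmem3 _ _ _ _ (k * x00) 0 (k * x12) ?_
          rw [map_smul, hXe2]; module
        · rw [t1] at hv
          obtain ⟨k, rfl⟩ := mem_span_singleton.mp hv
          show X (k • e 1) ∈ (DBC.sub 0 ⊔ DBC.sub 1) ⊔ DBC.sub 2
          rw [t0, t1, t2]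
          refine hmem3 _ _ _ _ (k * (x21 - x01 * u / p))
            (k * x11) (k * (x01 / p)) ?_
          rw [map_smul, hXe1]
          match_scalars <;> field_simp <;> ring
        · rw [t2] at hv
          obtain ⟨k, rfl⟩ := mem_span_singleton.mp hv
          show X (k • (p • e 0 + u • e 2)) ∈ (DBC.sub 1 ⊔ DBC.sub 2) ⊔ DBC.sub 3
          rw [t1, t2, bot3BC, sup_bot_eq]
          refine hmem2 _ _ _ (k * (p * x10 + u * x12))
            (k * x00) ?_
          rw [map_smul, hXw, hXe0, hXe2]
          module
        · rw [DBC.eq_bot_of_gt (n+3) (by omega), mem_bot] at hv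
          subst hv
          simp only [map_zero]
          exact zero_mem _
      · -- DCA
        intro i v hv
        rcases i with _ | _ | _ | n
        · rw [r0] at hv
          obtain ⟨k, rfl⟩ := mem_span_singleton.mp hv
          show X (k • (p • e 0 + u • e 2)) ∈ (DCA.sub 0 ⊔ DCA.sub 0) ⊔ DCA.sub 1
          rw [r0, r1]
          refine hmem3 _ _ _ _ (k * x00) 0
            (k * (p * x10 + u * x12)) ?_
          rw [map_smul, hXw, hXe0, hXe2]
          module
        · rw [r1] at hv
          obtain ⟨k, rfl⟩ := mem_span_singleton.mp hv
          show X (k • e 1) ∈ (DCA.sub 0 ⊔ DCA.sub 1) ⊔ DCA.sub 2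
          rw [r0, r1, r2]
          refine hmem3 _ _ _ _ (k * (x21 / u)) (k * x11)
            (k * (x01 - x21 * p / u)) ?_
          rw [map_smul, hXe1]
          match_scalars <;> field_simp <;> ring
        · rw [r2] at hv
          obtain ⟨k, rfl⟩ := mem_span_singleton.mp hv
          show X (k • e 0) ∈ (DCA.sub 1 ⊔ DCA.sub 2) ⊔ DCA.sub 3
          rw [r1, r2, bot3CA, sup_bot_eq]
          refine hmem2 _ _ _ (k * x10) (k * x00) ?_
          rw [map_smul, hXe0]; module
        · rw [DCA.eq_bot_of_gt (n+3) (by omega), mem_bot] at hv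
          subst hv
          simp only [map_zero]
          exact zero_mem _
  -- helper: coefficient extraction
  have hz2 : ∀ α β : F, α • e 0 + β • e 1 = 0 → α = 0 ∧ β = 0 := by
    intro α β h
    have h' : α • e 0 + β • e 1 + (0:F) • e 2 = 0 := by rw [zero_smul, add_zero]; exact h
    exact ⟨(hz _ _ _ h').1, (hz _ _ _ h').2.1⟩
  have hz2' : ∀ α β : F, α • e 2 + β • e 1 = 0 → α = 0 ∧ β = 0 := by
    intro α β h
    have h' : (0:F) • e 0 + β • e 1 + α • e 2 = 0 := by
      rw [zero_smul, zero_add, add_comm]; exact h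
    exact ⟨(hz _ _ _ h').2.2, (hz _ _ _ h').2.1⟩
  have hz3 : ∀ α β γ : F, α • e 1 + β • e 0 + γ • e 2 = 0 → α = 0 ∧ β = 0 ∧ γ = 0 := by
    intro α β γ h
    have h' : β • e 0 + α • e 1 + γ • e 2 = 0 := by rw [← h]; module
    exact ⟨(hz _ _ _ h').2.1, (hz _ _ _ h').1, (hz _ _ _ h').2.2⟩
  -- the projection recording the three linear constraints
  set φ : Module.End F V →ₗ[F] (Fin 3 → F) :=
    { toFun := fun X => ![e.repr (X (e 2)) 0, e.repr (X (e 0)) 2,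
        e.repr (X (e 0)) 0 - e.repr (X (e 2)) 2]
      map_add' := by
        intro X Y
        funext i
        fin_cases i <;>
          simp [LinearMap.add_apply, Finsupp.add_apply] <;> ring
      map_smul' := by
        intro k X
        funext i
        fin_cases i <;>
          simp [LinearMap.smul_apply, Finsupp.smul_apply] <;> ring } with hφ
  have hφval : ∀ X : Module.End F V, φ X = ![e.repr (X (e 2)) 0, e.repr (X (e 0)) 2,
      e.repr (X (e 0)) 0 - e.repr (X (e 2)) 2] := fun X => rfl
  have hker : tridiagSpace DAB DBC DCA = LinearMap.ker φ := by
    ext X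
    rw [hXchar, LinearMap.mem_ker, hφval]
    constructor
    · rintro ⟨h1, h2, h3⟩
      funext i
      fin_cases i <;> simp [h1, h2, h3]
    · intro h
      have h0 := congrFun h 0
      have h1 := congrFun h 1
      have h2 := congrFun h 2
      simp at h0 h1 h2
      exact ⟨h1, h0, sub_eq_zero.mp h2⟩
  have hsurj : Function.Surjective φ := by
    intro y
    refine ⟨e.constr F ![y 2 • e 0 + y 1 • e 2, 0, y 0 • e 0], ?_⟩
    rw [hφval]
    funext i
    fin_cases i <;>
      simp [Module.Basis.constr_basis, Finsupp.single_apply]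
  have hfin : Module.finrank F (tridiagSpace DAB DBC DCA) = 6 := by
    have h1 := LinearMap.finrank_range_add_finrank_ker φ
    rw [LinearMap.range_eq_top.mpr hsurj] at h1
    have h2 : Module.finrank F (Module.End F V) = 9 := by
      rw [Module.finrank_linearMap F F V V, hdim]
    have h3 : Module.finrank F (⊤ : Submodule F (Fin 3 → F)) = 3 := by simp
    rw [hker]
    omega
  -- memberships
  have hAmem : A ∈ tridiagSpace DAB DBC DCA := by
    rw [hXchar]
    refine ⟨?_, ?_, ?_⟩ <;> simp [hA0, hA1, hA2, Finsupp.single_apply]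
  have hBmem : B ∈ tridiagSpace DAB DBC DCA := by
    rw [hXchar]
    refine ⟨?_, ?_, ?_⟩ <;> simp [hB0, hB1, hB2, Finsupp.single_apply]
  have hImem : (1 : Module.End F V) ∈ tridiagSpace DAB DBC DCA := by
    rw [hXchar]
    refine ⟨?_, ?_, ?_⟩ <;> simp [Module.End.one_apply, Finsupp.single_apply]
  have hJmem : J ∈ tridiagSpace DAB DBC DCA := by
    rw [hXchar]
    refine ⟨?_, ?_, ?_⟩ <;> simp [hJ0, hJ1, hJ2, Finsupp.single_apply]
  have hJJ : J * J = J := by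
    apply e.ext
    intro i
    fin_cases i <;> simp [Module.End.mul_apply, hJ0, hJ1, hJ2]
  -- structure of X e i for X in the tridiagonal space
  have hXrepr : ∀ X : Module.End F V, X ∈ tridiagSpace DAB DBC DCA →
      X (e 0) = e.repr (X (e 0)) 0 • e 0 + e.repr (X (e 0)) 1 • e 1 ∧
      X (e 2) = e.repr (X (e 2)) 1 • e 1 + e.repr (X (e 0)) 0 • e 2 := by
    intro X hX
    obtain ⟨h20, h02, h0022⟩ := (hXchar X).mp hX
    constructor
    · have h := hco (X (e 0)); rwa [h20, zero_smul, add_zero] at h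
    · have h := hco (X (e 2)); rwa [h02, zero_smul, zero_add, ← h0022] at h
  -- actions of 1 - J
  have hK0 : (1 - J) (e 0) = 0 := by
    simp [LinearMap.sub_apply, Module.End.one_apply, hJ0]
  have hK1 : (1 - J) (e 1) = e 1 := by
    simp [LinearMap.sub_apply, Module.End.one_apply, hJ1]
  have hK2 : (1 - J) (e 2) = 0 := by
    simp [LinearMap.sub_apply, Module.End.one_apply, hJ2]
  -- span equality for J
  have hspan1 : Submodule.span F ({J, A * J, B * J} : Set (Module.End F V)) =
      Submodule.map (LinearMap.mulRight F J) (tridiagSpace DAB DBC DCA) := by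
    apply le_antisymm
    · rw [Submodule.span_le]
      rintro x hx
      simp only [Set.mem_insert_iff, Set.mem_singleton_iff] at hx
      rcases hx with rfl | rfl | rfl
      · exact ⟨_, hJmem, by rw [LinearMap.mulRight_apply, hJJ]⟩
      · exact ⟨A, hAmem, by rw [LinearMap.mulRight_apply]⟩
      · exact ⟨B, hBmem, by rw [LinearMap.mulRight_apply]⟩
    · rintro x ⟨X, hX, rfl⟩
      rw [LinearMap.mulRight_apply]
      obtain ⟨hX0, hX2⟩ := hXrepr X hX
      obtain ⟨x00, hx00⟩ : ∃ x, e.repr (X (e 0)) 0 = x := ⟨_, rfl⟩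
      obtain ⟨x10, hx10⟩ : ∃ x, e.repr (X (e 0)) 1 = x := ⟨_, rfl⟩
      obtain ⟨x12, hx12⟩ : ∃ x, e.repr (X (e 2)) 1 = x := ⟨_, rfl⟩
      rw [hx00, hx10] at hX0
      rw [hx12, hx00] at hX2
      have key2 : X * J = x00 • J + x12 • (A * J) +
          (x10 * b⁻¹) • (B * J) := by
        apply e.ext
        intro i
        fin_cases i
        · simp only [Fin.zero_eta, Fin.isValue, Module.End.mul_apply, LinearMap.add_apply,
            LinearMap.smul_apply, hJ0, hJ1, hJ2, hA0, hA1, hA2, hB0, hB1, hB2, hX0, hX2]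
          match_scalars <;> field_simp
        · simp [Module.End.mul_apply, hJ1]
        · simp only [Fin.isValue, show (⟨2, by omega⟩ : Fin 3) = 2 from rfl,
            Module.End.mul_apply, LinearMap.add_apply,
            LinearMap.smul_apply, hJ0, hJ1, hJ2, hA0, hA1, hA2, hB0, hB1, hB2, hX0, hX2]
          match_scalars <;> field_simp
      rw [key2]
      refine add_mem (add_mem ?_ ?_) ?_ <;>
        exact Submodule.smul_mem _ _ (Submodule.subset_span (by simp))
  -- span equality for 1 - J
  have hspan2 : Submodule.span F ({1 - J, A * (1 - J), B * (1 - J)} : Set (Module.End F V)) =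
      Submodule.map (LinearMap.mulRight F (1 - J)) (tridiagSpace DAB DBC DCA) := by
    apply le_antisymm
    · rw [Submodule.span_le]
      rintro x hx
      simp only [Set.mem_insert_iff, Set.mem_singleton_iff] at hx
      rcases hx with rfl | rfl | rfl
      · exact ⟨_, hImem, by rw [LinearMap.mulRight_apply, one_mul]⟩
      · exact ⟨A, hAmem, by rw [LinearMap.mulRight_apply]⟩
      · exact ⟨B, hBmem, by rw [LinearMap.mulRight_apply]⟩
    · rintro x ⟨X, hX, rfl⟩
      rw [LinearMap.mulRight_apply]
      obtain ⟨x01, hx01⟩ : ∃ x, e.repr (X (e 1)) 0 = x := ⟨_, rfl⟩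
      obtain ⟨x11, hx11⟩ : ∃ x, e.repr (X (e 1)) 1 = x := ⟨_, rfl⟩
      obtain ⟨x21, hx21⟩ : ∃ x, e.repr (X (e 1)) 2 = x := ⟨_, rfl⟩
      have hX1 : X (e 1) = x01 • e 0 + x11 • e 1 + x21 • e 2 := by
        have h := hco (X (e 1)); rwa [hx01, hx11, hx21] at h
      have key2 : X * (1 - J) = x11 • (1 - J) +
          x01 • (A * (1 - J)) +
          (x21 * c⁻¹) • (B * (1 - J)) := by
        apply e.ext
        intro i
        fin_cases i
        · simp [Module.End.mul_apply, hK0]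
        · simp only [Fin.mk_one, Fin.isValue, Module.End.mul_apply, LinearMap.add_apply,
            LinearMap.smul_apply, hK0, hK1, hK2, hA0, hA1, hA2, hB0, hB1, hB2, hX1]
          match_scalars <;> field_simp
        · simp [Module.End.mul_apply, hK2]
      rw [key2]
      refine add_mem (add_mem ?_ ?_) ?_ <;>
        exact Submodule.smul_mem _ _ (Submodule.subset_span (by simp))
  -- linear independence for J
  have hind1 : LinearIndependent F ![J, A * J, B * J] := by
    rw [Fintype.linearIndependent_iff]
    intro g hg
    rw [Fin.sum_univ_three] at hg
    simp only [Matrix.cons_val_zero, Matrix.cons_val_one, Matrix.head_cons,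
      Matrix.cons_val_two, Matrix.tail_cons] at hg
    have h0 : g 0 • e 0 + (g 2 * b) • e 1 = 0 := by
      have := LinearMap.congr_fun hg (e 0)
      simpa [Module.End.mul_apply, hJ0, hA0, hB0, smul_smul] using this
    have h2 : g 0 • e 2 + g 1 • e 1 = 0 := by
      have := LinearMap.congr_fun hg (e 2)
      simpa [Module.End.mul_apply, hJ2, hA2, hB2, smul_smul] using this
    have c0 := (hz2 _ _ h0).1
    have c2 : g 2 = 0 := by
      rcases mul_eq_zero.mp (hz2 _ _ h0).2 with h | h
      · exact h
      · exact absurd h hb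
    have c1 := (hz2' _ _ h2).2
    intro i
    fin_cases i <;> assumption
  -- linear independence for 1 - J
  have hind2 : LinearIndependent F ![1 - J, A * (1 - J), B * (1 - J)] := by
    rw [Fintype.linearIndependent_iff]
    intro g hg
    rw [Fin.sum_univ_three] at hg
    simp only [Matrix.cons_val_zero, Matrix.cons_val_one, Matrix.head_cons,
      Matrix.cons_val_two, Matrix.tail_cons] at hg
    have h1 : g 0 • e 1 + g 1 • e 0 + (g 2 * c) • e 2 = 0 := by
      have := LinearMap.congr_fun hg (e 1)
      simpa [Module.End.mul_apply, hK1, hA1, hB1, smul_smul] using this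
    obtain ⟨c0, c1, c2c⟩ := hz3 _ _ _ h1
    have c2 : g 2 = 0 := by
      rcases mul_eq_zero.mp c2c with h | h
      · exact h
      · exact absurd h hc
    intro i
    fin_cases i <;> assumption
  exact ⟨hfin, hind1, hspan1, hind2, hspan2⟩

open Submodule in
lemma span_of_finrank_one {F : Type*} [Field F] {V : Type*} [AddCommGroup V] [Module F V]
    [FiniteDimensional F V] (S : Submodule F V) (h : Module.finrank F S = 1) :
    ∃ v : V, v ≠ 0 ∧ S = span F {v} := by
  have : Nontrivial S := Module.nontrivial_of_finrank_pos (R := F) (by omega)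
  obtain ⟨⟨v, hv⟩, hvne⟩ := exists_ne (0 : S)
  have hv0 : v ≠ 0 := by simpa [Subtype.ext_iff] using hvne
  refine ⟨v, hv0, ?_⟩
  symm
  apply Submodule.eq_of_le_of_finrank_eq
  · rwa [Submodule.span_le, Set.singleton_subset_iff]
  · rw [finrank_span_singleton hv0, h]

open Submodule in
theorem stmt3
    {F : Type*} [Field F] {V : Type*} [AddCommGroup V] [Module F V]
    [FiniteDimensional F V] {d : ℕ} (hdim : Module.finrank F V = d + 1)
    (A B C : Module.End F V) (DAB DBC DCA : LRDecomp F V d)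
    (hAB : IsLRPairWith A B DAB) (hBC : IsLRPairWith B C DBC) (hCA : IsLRPairWith C A DCA)
    (hd : d = 2)
    (E E' E'' : ℕ → Module.End F V)
    (hE : IsIdemSeq DAB E) (hE' : IsIdemSeq DBC E') (hE'' : IsIdemSeq DCA E'')
    (hbip : IsBipartite d A B C E E' E'')
    (J : Module.End F V) (hJ : J = ∑ j ∈ Finset.range (d / 2 + 1), E (2 * j)) :
    Module.finrank F (tridiagSpace DAB DBC DCA) = 6 ∧
    LinearIndependent F ![J, A * J, B * J] ∧
    Submodule.span F ({J, A * J, B * J} : Set (Module.End F V)) = Submodule.map (LinearMap.mulRight F J) (tridiagSpace DAB DBC DCA) ∧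
    LinearIndependent F ![1 - J, A * (1 - J), B * (1 - J)] ∧
    Submodule.span F ({1 - J, A * (1 - J), B * (1 - J)} : Set (Module.End F V)) = Submodule.map (LinearMap.mulRight F (1 - J)) (tridiagSpace DAB DBC DCA) := by
  subst hd
  have hdim3 : Module.finrank F V = 3 := by omega
  -- nontrivial subspaces
  have hne : ∀ i ≤ 2, DAB.sub i ≠ ⊥ := by
    intro i hi h
    have := DAB.finrank_eq_one i hi
    rw [h] at this
    simp at this
  -- construct the adapted basis from the (A,B)-decomposition
  obtain ⟨v2, hv2ne, hs2⟩ := span_of_finrank_one (DAB.sub 2) (DAB.finrank_eq_one 2 le_rfl)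
  have hmap21 : DAB.sub 1 = span F {A v2} := by
    have h := hAB.1.2 1 (by omega)
    rw [hs2, Submodule.map_span, Set.image_singleton] at h
    exact h.symm
  have hmap10 : DAB.sub 0 = span F {A (A v2)} := by
    have h := hAB.1.2 0 (by omega)
    rw [hmap21, Submodule.map_span, Set.image_singleton] at h
    exact h.symm
  set v1 := A v2 with hv1
  set v0 := A v1 with hv0
  have hv1ne : v1 ≠ 0 := by
    intro h
    exact hne 1 (by omega) (by rw [hmap21, h, Submodule.span_zero_singleton])
  have hv0ne : v0 ≠ 0 := by
    intro h
    exact hne 0 (by omega) (by rw [hmap10, h, Submodule.span_zero_singleton])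
  have hAv0 : A v0 = 0 := by
    have h := hAB.1.1
    have hv0mem : v0 ∈ DAB.sub 0 := by rw [hmap10]; exact mem_span_singleton_self _
    have : A v0 ∈ (⊥ : Submodule F V) := h ▸ Submodule.mem_map_of_mem (f := A) hv0mem
    simpa using this
  -- independence and basis
  have hind : LinearIndependent F ![v0, v1, v2] := by
    have hip : iSupIndep fun i : Fin 3 => DAB.sub i.val := by
      exact DAB.isInternal.submodule_iSupIndep
    refine iSupIndep.linearIndependent _ hip (v := ![v0, v1, v2]) ?_ ?_
    · intro i
      fin_cases i
      · show v0 ∈ DAB.sub 0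
        rw [hmap10]; exact mem_span_singleton_self _
      · show v1 ∈ DAB.sub 1
        rw [hmap21]; exact mem_span_singleton_self _
      · show v2 ∈ DAB.sub 2
        rw [hs2]; exact mem_span_singleton_self _
    · intro i
      fin_cases i <;> assumption
  let e : Module.Basis (Fin 3) F V := basisOfLinearIndependentOfCardEqFinrank hind (by simp [hdim3])
  have he : ∀ i, e i = ![v0, v1, v2] i := fun i => by
    rw [show e = basisOfLinearIndependentOfCardEqFinrank hind (by simp [hdim3]) from rfl,
      coe_basisOfLinearIndependentOfCardEqFinrank]
  have he0 : e 0 = v0 := he 0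
  have he1 : e 1 = v1 := he 1
  have he2 : e 2 = v2 := he 2
  -- coordinates
  have hco : ∀ w : V, w = e.repr w 0 • e 0 + e.repr w 1 • e 1 + e.repr w 2 • e 2 := by
    intro w
    have h := e.sum_repr w
    rw [Fin.sum_univ_three] at h
    exact h.symm
  have hz : ∀ α β γ : F, α • e 0 + β • e 1 + γ • e 2 = 0 → α = 0 ∧ β = 0 ∧ γ = 0 := by
    intro α β γ h
    refine ⟨?_, ?_, ?_⟩
    · have := congrArg (fun w => (e.repr w) 0) h
      simpa [Finsupp.single_apply] using this
    · have := congrArg (fun w => (e.repr w) 1) h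
      simpa [Finsupp.single_apply] using this
    · have := congrArg (fun w => (e.repr w) 2) h
      simpa [Finsupp.single_apply] using this
  -- actions of A on the basis
  have hA0 : A (e 0) = 0 := by rw [he0]; exact hAv0
  have hA1 : A (e 1) = e 0 := by rw [he1, he0]
  have hA2 : A (e 2) = e 1 := by rw [he2, he1]
  -- subspaces of DAB
  have s0 : DAB.sub 0 = span F {e 0} := by rw [he0]; exact hmap10
  have s1 : DAB.sub 1 = span F {e 1} := by rw [he1]; exact hmap21
  have s2 : DAB.sub 2 = span F {e 2} := by rw [he2]; exact hs2
  -- actions of B on the basis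
  obtain ⟨b, hb0⟩ : ∃ b : F, B (e 0) = b • e 1 := by
    have h := hAB.2 0 (by omega)
    rw [s0, s1, Submodule.map_span, Set.image_singleton] at h
    obtain ⟨b, hb⟩ := mem_span_singleton.mp (h ▸ mem_span_singleton_self (B (e 0)))
    exact ⟨b, hb.symm⟩
  obtain ⟨c, hc0⟩ : ∃ c : F, B (e 1) = c • e 2 := by
    have h := hAB.2 1 (by omega)
    rw [s1, s2, Submodule.map_span, Set.image_singleton] at h
    obtain ⟨c, hc⟩ := mem_span_singleton.mp (h ▸ mem_span_singleton_self (B (e 1)))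
    exact ⟨c, hc.symm⟩
  have hB2 : B (e 2) = 0 := by
    have h := hAB.2 2 le_rfl
    rw [s2, DAB.eq_bot_of_gt 3 (by omega), Submodule.map_span, Set.image_singleton] at h
    exact Submodule.span_eq_bot.mp h (B (e 2)) rfl
  have he1ne : e 1 ≠ 0 := by rw [he1]; exact hv1ne
  have he2ne : e 2 ≠ 0 := by rw [he2]; exact hv2ne
  have he0ne : e 0 ≠ 0 := by rw [he0]; exact hv0ne
  have hb : b ≠ 0 := by
    rintro rfl
    rw [zero_smul] at hb0
    have h := hAB.2 0 (by omega)
    rw [s0, s1, Submodule.map_span, Set.image_singleton, hb0,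
      Submodule.span_zero_singleton] at h
    exact he1ne (Submodule.span_eq_bot.mp h.symm (e 1) rfl)
  have hc : c ≠ 0 := by
    rintro rfl
    rw [zero_smul] at hc0
    have h := hAB.2 1 (by omega)
    rw [s1, s2, Submodule.map_span, Set.image_singleton, hc0,
      Submodule.span_zero_singleton] at h
    exact he2ne (Submodule.span_eq_bot.mp h.symm (e 2) rfl)
  -- membership of basis vectors
  have m0 : e 0 ∈ DAB.sub 0 := by rw [s0]; exact mem_span_singleton_self _
  have m1 : e 1 ∈ DAB.sub 1 := by rw [s1]; exact mem_span_singleton_self _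
  have m2 : e 2 ∈ DAB.sub 2 := by rw [s2]; exact mem_span_singleton_self _
  -- idempotent actions
  have hE00 : E 0 (e 0) = e 0 := (hE 0).1 _ m0
  have hE01 : E 0 (e 1) = 0 := (hE 0).2 1 (by omega) _ m1
  have hE02 : E 0 (e 2) = 0 := (hE 0).2 2 (by omega) _ m2
  have hE10 : E 1 (e 0) = 0 := (hE 1).2 0 (by omega) _ m0
  have hE11 : E 1 (e 1) = e 1 := (hE 1).1 _ m1
  have hE12 : E 1 (e 2) = 0 := (hE 1).2 2 (by omega) _ m2
  have hE20 : E 2 (e 0) = 0 := (hE 2).2 0 (by omega) _ m0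
  have hE21 : E 2 (e 1) = 0 := (hE 2).2 1 (by omega) _ m1
  have hE22 : E 2 (e 2) = e 2 := (hE 2).1 _ m2
  -- vanishing diagonal of C (bipartite conditions)
  have tr0 : e.repr (C (e 0)) 0 = 0 := by
    have h := (hbip 0 (by omega)).1
    rw [LinearMap.trace_eq_matrix_trace F e, Matrix.trace_fin_three] at h
    simpa [LinearMap.toMatrix_apply, Module.End.mul_apply, hE00, hE01, hE02] using h
  have tr1 : e.repr (C (e 1)) 1 = 0 := by
    have h := (hbip 1 (by omega)).1
    rw [LinearMap.trace_eq_matrix_trace F e, Matrix.trace_fin_three] at h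
    simpa [LinearMap.toMatrix_apply, Module.End.mul_apply, hE10, hE11, hE12] using h
  have tr2 : e.repr (C (e 2)) 2 = 0 := by
    have h := (hbip 2 (by omega)).1
    rw [LinearMap.trace_eq_matrix_trace F e, Matrix.trace_fin_three] at h
    simpa [LinearMap.toMatrix_apply, Module.End.mul_apply, hE20, hE21, hE22] using h
  -- more coefficient helpers
  have hz23 : ∀ α β : F, α • e 1 + β • e 2 = 0 → α = 0 ∧ β = 0 := by
    intro α β h
    have h' : (0:F) • e 0 + α • e 1 + β • e 2 = 0 := by rwa [zero_smul, zero_add]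
    exact ⟨(hz _ _ _ h').2.1, (hz _ _ _ h').2.2⟩
  have hz01 : ∀ α β : F, α • e 0 + β • e 1 = 0 → α = 0 ∧ β = 0 := by
    intro α β h
    have h' : α • e 0 + β • e 1 + (0:F) • e 2 = 0 := by rwa [zero_smul, add_zero]
    exact ⟨(hz _ _ _ h').1, (hz _ _ _ h').2.1⟩
  -- DBC.sub 0 = span {e 2}
  obtain ⟨z, hzne, hz0⟩ := span_of_finrank_one (DBC.sub 0) (DBC.finrank_eq_one 0 (by omega))
  have t0 : DBC.sub 0 = span F {e 2} := by
    have hBz : B z = 0 := by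
      have h := hBC.1.1
      have : B z ∈ (⊥ : Submodule F V) :=
        h ▸ Submodule.mem_map_of_mem (f := B) (by rw [hz0]; exact mem_span_singleton_self _)
      simpa using this
    have hzco := hco z
    have hz' : (e.repr z 0 * b) • e 1 + (e.repr z 1 * c) • e 2 = 0 := by
      rw [← hBz]
      nth_rewrite 3 [hzco]
      rw [map_add, map_add, map_smul, map_smul, map_smul, hb0, hc0, hB2, smul_zero, add_zero,
        smul_smul, smul_smul]
    obtain ⟨hα, hβ⟩ := hz23 _ _ hz'
    have hα0 : e.repr z 0 = 0 := by
      rcases mul_eq_zero.mp hα with h | h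
      · exact h
      · exact absurd h hb
    have hβ0 : e.repr z 1 = 0 := by
      rcases mul_eq_zero.mp hβ with h | h
      · exact h
      · exact absurd h hc
    rw [hα0, hβ0, zero_smul, zero_smul, zero_add, zero_add] at hzco
    have hγ : e.repr z 2 ≠ 0 := fun h => hzne (by rw [hzco, h, zero_smul])
    rw [hz0, hzco]
    exact Submodule.span_singleton_smul_eq (IsUnit.mk0 _ hγ) _
  -- DCA.sub 2 = span {e 0}
  obtain ⟨z', hz'ne, hz'0⟩ := span_of_finrank_one (DCA.sub 2) (DCA.finrank_eq_one 2 le_rfl)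
  have r2 : DCA.sub 2 = span F {e 0} := by
    have hAz : A z' = 0 := by
      have h := hCA.2 2 le_rfl
      rw [DCA.eq_bot_of_gt 3 (by omega)] at h
      have : A z' ∈ (⊥ : Submodule F V) :=
        h ▸ Submodule.mem_map_of_mem (f := A) (by rw [hz'0]; exact mem_span_singleton_self _)
      simpa using this
    have hzco := hco z'
    have hz' : e.repr z' 1 • e 0 + e.repr z' 2 • e 1 = 0 := by
      rw [← hAz]
      nth_rewrite 3 [hzco]
      rw [map_add, map_add, map_smul, map_smul, map_smul, hA0, hA1, hA2, smul_zero, zero_add]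
    obtain ⟨hα, hβ⟩ := hz01 _ _ hz'
    rw [hα, hβ, zero_smul, zero_smul, add_zero, add_zero] at hzco
    have hγ : e.repr z' 0 ≠ 0 := fun h => hz'ne (by rw [hzco, h, zero_smul])
    rw [hz'0, hzco]
    exact Submodule.span_singleton_smul_eq (IsUnit.mk0 _ hγ) _
  -- DCA.sub 1 = span {e 1}
  have hCA1span : span F {C (e 0)} = DCA.sub 1 := by
    have h := hCA.1.2 1 (by omega)
    rwa [r2, Submodule.map_span, Set.image_singleton] at h
  obtain ⟨r, hr'⟩ : ∃ x, e.repr (C (e 0)) 1 = x := ⟨_, rfl⟩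
  obtain ⟨t, ht'⟩ : ∃ x, e.repr (C (e 0)) 2 = x := ⟨_, rfl⟩
  have hCe0 : C (e 0) = r • e 1 + t • e 2 := by
    have h := hco (C (e 0))
    rwa [tr0, zero_smul, zero_add, hr', ht'] at h
  have hACspan : span F {A (C (e 0))} = span F {e 0} := by
    have h2 := hCA.2 1 (by omega)
    rwa [← hCA1span, r2, Submodule.map_span, Set.image_singleton] at h2
  have hACe0 : A (C (e 0)) = r • e 0 + t • e 1 := by
    rw [hCe0, map_add, map_smul, map_smul, hA1, hA2]
  have ht0 : t = 0 := by
    obtain ⟨k, hk⟩ := mem_span_singleton.mp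
      (hACspan ▸ mem_span_singleton_self (A (C (e 0))))
    rw [hACe0] at hk
    have := congrArg (fun w => (e.repr w) 1) hk
    simpa [Finsupp.single_apply] using this.symm
  have hrne : r ≠ 0 := by
    intro h
    rw [ht0, h, zero_smul, zero_smul, add_zero] at hACe0
    rw [hACe0, Submodule.span_zero_singleton] at hACspan
    exact he0ne (Submodule.span_eq_bot.mp hACspan.symm (e 0) rfl)
  rw [ht0, zero_smul, add_zero] at hCe0
  have r1 : DCA.sub 1 = span F {e 1} := by
    rw [← hCA1span, hCe0]
    exact Submodule.span_singleton_smul_eq (IsUnit.mk0 _ hrne) _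
  -- DBC.sub 1 = span {e 1}
  have hBC1span : span F {C (e 2)} = DBC.sub 1 := by
    have h := hBC.2 0 (by omega)
    rwa [t0, Submodule.map_span, Set.image_singleton] at h
  obtain ⟨q, hq'⟩ : ∃ x, e.repr (C (e 2)) 0 = x := ⟨_, rfl⟩
  obtain ⟨sc, hsc'⟩ : ∃ x, e.repr (C (e 2)) 1 = x := ⟨_, rfl⟩
  have hCe2 : C (e 2) = q • e 0 + sc • e 1 := by
    have h := hco (C (e 2))
    rwa [tr2, zero_smul, add_zero, hq', hsc'] at h
  have hBCspan : span F {B (C (e 2))} = span F {e 2} := by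
    have h2 := hBC.1.2 0 (by omega)
    rwa [← hBC1span, t0, Submodule.map_span, Set.image_singleton] at h2
  have hBCe2 : B (C (e 2)) = (q * b) • e 1 + (sc * c) • e 2 := by
    rw [hCe2, map_add, map_smul, map_smul, hb0, hc0, smul_smul, smul_smul]
  have hq0 : q = 0 := by
    obtain ⟨k, hk⟩ := mem_span_singleton.mp
      (hBCspan ▸ mem_span_singleton_self (B (C (e 2))))
    rw [hBCe2] at hk
    have := congrArg (fun w => (e.repr w) 1) hk
    simp [Finsupp.single_apply] at this
    rcases this with h | h
    · exact h
    · exact absurd h hb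
  have hscne : sc ≠ 0 := by
    intro h
    rw [hq0, h, zero_smul, zero_smul, add_zero] at hCe2
    rw [hCe2, Submodule.span_zero_singleton] at hBC1span
    have hBC1ne : DBC.sub 1 ≠ ⊥ := by
      intro hh
      have hfr := DBC.finrank_eq_one 1 (by omega)
      rw [hh] at hfr
      simp at hfr
    exact hBC1ne hBC1span.symm
  rw [hq0, zero_smul, zero_add] at hCe2
  have t1 : DBC.sub 1 = span F {e 1} := by
    rw [← hBC1span, hCe2]
    exact Submodule.span_singleton_smul_eq (IsUnit.mk0 _ hscne) _
  -- C (e 1) and the remaining subspaces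
  obtain ⟨p, hp'⟩ : ∃ x, e.repr (C (e 1)) 0 = x := ⟨_, rfl⟩
  obtain ⟨u, hu'⟩ : ∃ x, e.repr (C (e 1)) 2 = x := ⟨_, rfl⟩
  have hCe1 : C (e 1) = p • e 0 + u • e 2 := by
    have h := hco (C (e 1))
    rwa [tr1, zero_smul, add_zero, hp', hu'] at h
  have t2 : DBC.sub 2 = span F {p • e 0 + u • e 2} := by
    have h := hBC.2 1 (by omega)
    rw [t1, Submodule.map_span, Set.image_singleton, hCe1] at h
    exact h.symm
  have r0 : DCA.sub 0 = span F {p • e 0 + u • e 2} := by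
    have h := hCA.1.2 0 (by omega)
    rw [r1, Submodule.map_span, Set.image_singleton, hCe1] at h
    exact h.symm
  have hAw : A (p • e 0 + u • e 2) = u • e 1 := by
    rw [map_add, map_smul, map_smul, hA0, hA2, smul_zero, zero_add]
  have hBw : B (p • e 0 + u • e 2) = (p * b) • e 1 := by
    rw [map_add, map_smul, map_smul, hb0, hB2, smul_zero, add_zero, smul_smul]
  have hu : u ≠ 0 := by
    intro h
    have h2 := hCA.2 0 (by omega)
    rw [r0, r1, Submodule.map_span, Set.image_singleton, hAw, h, zero_smul,
      Submodule.span_zero_singleton] at h2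
    exact he1ne (Submodule.span_eq_bot.mp h2.symm (e 1) rfl)
  have hp : p ≠ 0 := by
    intro h
    have h2 := hBC.1.2 1 (by omega)
    rw [t2, t1, Submodule.map_span, Set.image_singleton, hBw, h, zero_mul, zero_smul,
      Submodule.span_zero_singleton] at h2
    exact he1ne (Submodule.span_eq_bot.mp h2.symm (e 1) rfl)
  -- action of J
  have hJ' : J = E 0 + E 2 := by
    rw [hJ]
    norm_num [Finset.sum_range_succ]
  have hJ0 : J (e 0) = e 0 := by
    rw [hJ', LinearMap.add_apply, hE00, hE20, add_zero]
  have hJ1 : J (e 1) = 0 := by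
    rw [hJ', LinearMap.add_apply, hE01, hE21, add_zero]
  have hJ2 : J (e 2) = e 2 := by
    rw [hJ', LinearMap.add_apply, hE02, hE22, zero_add]
  exact key hdim3 A B DAB DBC DCA e b c p u hb hc hp hu hA0 hA1 hA2 hb0 hc0 hB2
    s0 s1 s2 t0 t1 t2 r0 r1 r2 J hJ0 hJ1 hJ2
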